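/- Let Q : ℝ → [0,∞) be a strictly convex even function and φ a measurable function on an interval J. If the set A = {c ∈ ℝ : ⟨Q(φ−c)⟩_J < ∞} is nonempty, then there is a unique c ∈ ℝ minimizing c ↦ ⟨Q(φ−c)⟩_J over ℝ. -/

import Mathlib

open MeasureTheory Set Filter Topology
open scoped ENNReal

noncomputable section

/-- Lebesgue average of a (nonnegative-valued, via `ENNReal.ofReal`) function over `J`. -/
def avg (J : Set ℝ) (f : ℝ → ℝ) : ℝ≥0∞ :=
  (volume J)⁻¹ * ∫⁻ x in J, ENNReal.ofReal (f x)

/-- `V_c(φ, J) = ⟨Q(φ - c)⟩_J`. -/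
def Vc (Q φ : ℝ → ℝ) (J : Set ℝ) (c : ℝ) : ℝ≥0∞ :=
  avg J (fun x => Q (φ x - c))

/-- `V(φ, J) = inf_c V_c(φ, J)`. -/
def V (Q φ : ℝ → ℝ) (J : Set ℝ) : ℝ≥0∞ :=
  ⨅ c : ℝ, Vc Q φ J c

/-- `W(φ, J) = sup { V(φ, L) : L ⊆ J an interval }`. -/
def W (Q φ : ℝ → ℝ) (J : Set ℝ) : ℝ≥0∞ :=
  ⨆ (a : ℝ) (b : ℝ) (_ : Icc a b ⊆ J), V Q φ (Icc a b)

/-- Decreasing rearrangement of `f : [0,1] → ℝ`: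
`f*(t) = inf {λ : |{s ∈ [0,1] : f(s) > λ}| ≤ t}`. -/
def decRe (f : ℝ → ℝ) (t : ℝ) : ℝ :=
  sInf {l : ℝ | volume {s ∈ Icc (0:ℝ) 1 | l < f s} ≤ ENNReal.ofReal t}

/-- `𝒞(φ, J)`: the minimizer of `c ↦ V_c(φ, J)` (when it exists). -/
def CC (Q φ : ℝ → ℝ) (J : Set ℝ) : ℝ :=
  Classical.epsilon (fun c => ∀ c', Vc Q φ J c ≤ Vc Q φ J c')

/-- `α`-concatenation of `φ₋ : [a₋,b₋] → ℝ` and `φ₊ : [a₊,b₊] → ℝ`, as a function on `[0,1]`. -/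
def concat (φm φp : ℝ → ℝ) (am bm ap bp α : ℝ) : ℝ → ℝ :=
  fun s => if s < α then φm (am + (bm - am) * (s / α))
           else φp (ap + (bp - ap) * ((s - α) / (1 - α)))

lemma myQmono (Q : ℝ → ℝ) (hQ : StrictConvexOn ℝ univ Q) (hQe : ∀ t, Q (-t) = Q t) :
    ∀ s t : ℝ, 0 ≤ s → s ≤ t → Q s ≤ Q t := by
  intro s t hs hst
  rcases eq_or_lt_of_le hst with rfl | h
  · exact le_refl _
  have ht : 0 < t := lt_of_le_of_lt hs h
  have hθ : (0:ℝ) ≤ (t - s)/(2*t) := div_nonneg (by linarith) (by linarith)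
  have h1θ : (0:ℝ) ≤ (t + s)/(2*t) := div_nonneg (by linarith) (by linarith)
  have hsum : (t-s)/(2*t) + (t+s)/(2*t) = 1 := by field_simp; ring
  have key := hQ.convexOn.2 (mem_univ (-t)) (mem_univ t) hθ h1θ hsum
  simp only [smul_eq_mul] at key
  have heq : (t-s)/(2*t)*(-t) + (t+s)/(2*t)*t = s := by field_simp; ring
  rw [heq, hQe] at key
  have : (t-s)/(2*t)*Q t + (t+s)/(2*t)*Q t = Q t := by rw [← add_mul, hsum, one_mul]
  linarith

lemma myQtop (Q : ℝ → ℝ) (hQ : StrictConvexOn ℝ univ Q) (hQe : ∀ t, Q (-t) = Q t) :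
    Tendsto Q atTop atTop := by
  have h01 : Q 0 < Q 1 := by
    have := hQ.2 (mem_univ (-1:ℝ)) (mem_univ (1:ℝ)) (by norm_num)
      (by norm_num : (0:ℝ) < 1/2) (by norm_num : (0:ℝ) < 1/2) (by norm_num)
    simp only [smul_eq_mul] at this
    rw [hQe 1] at this
    norm_num at this
    linarith
  have hk : 0 < Q 1 - Q 0 := by linarith
  have hlin : Tendsto (fun t : ℝ => Q 1 + (t - 1) * (Q 1 - Q 0)) atTop atTop := by
    apply tendsto_atTop_add_const_left
    exact (tendsto_atTop_add_const_right atTop (-1) tendsto_id).atTop_mul_const hk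
  refine tendsto_atTop_mono' atTop ?_ hlin
  filter_upwards [eventually_gt_atTop (1:ℝ)] with t ht
  have hs := hQ.convexOn.slope_mono_adjacent (mem_univ (0:ℝ)) (mem_univ t)
    (by norm_num : (0:ℝ) < 1) ht
  have h1 : Q 1 - Q 0 ≤ (Q t - Q 1) / (t - 1) := by
    rw [sub_zero, div_one] at hs; exact hs
  have h2 : (Q 1 - Q 0) * (t - 1) ≤ Q t - Q 1 :=
    (le_div_iff₀ (by linarith : (0:ℝ) < t - 1)).mp h1
  nlinarith

theorem stmt3 (Q : ℝ → ℝ) (hQ : StrictConvexOn ℝ univ Q) (hQe : ∀ t, Q (-t) = Q t)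
    (hQ0 : ∀ t, 0 ≤ Q t) (φ : ℝ → ℝ) (hφ : Measurable φ) (a b : ℝ) (hab : a < b)
    (hA : ∃ c : ℝ, Vc Q φ (Icc a b) c < ⊤) :
    ∃! c : ℝ, ∀ c' : ℝ, Vc Q φ (Icc a b) c ≤ Vc Q φ (Icc a b) c' := by
  classical
  set F : ℝ → ℝ≥0∞ := fun c => ∫⁻ x in Icc a b, ENNReal.ofReal (Q (φ x - c)) with hF
  have hVc : ∀ c, Vc Q φ (Icc a b) c = (volume (Icc a b))⁻¹ * F c := fun c => rfl
  have hvol : volume (Icc a b) = ENNReal.ofReal (b - a) := Real.volume_Icc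
  have hvne0 : volume (Icc a b) ≠ 0 := by
    rw [hvol]
    exact (ENNReal.ofReal_pos.mpr (by linarith)).ne'
  have hvnetop : volume (Icc a b) ≠ ⊤ := by rw [hvol]; exact ENNReal.ofReal_ne_top
  have hv0 : (volume (Icc a b))⁻¹ ≠ 0 := ENNReal.inv_ne_zero.mpr hvnetop
  have hvt : (volume (Icc a b))⁻¹ ≠ ⊤ := ENNReal.inv_ne_top.mpr hvne0
  have hiff : ∀ c c', (Vc Q φ (Icc a b) c ≤ Vc Q φ (Icc a b) c') ↔ F c ≤ F c' := by
    intro c c'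
    rw [hVc, hVc]
    exact ENNReal.mul_le_mul_iff_right hv0 hvt
  obtain ⟨c₀, hc₀⟩ := hA
  have hFc₀ : F c₀ ≠ ⊤ := by
    intro h
    rw [hVc, h, ENNReal.mul_top hv0] at hc₀
    exact lt_irrefl _ hc₀
  have hQcont : Continuous Q := by
    have := hQ.convexOn.continuousOn isOpen_univ
    rwa [continuousOn_univ] at this
  have hmeas : ∀ c : ℝ, Measurable fun x => ENNReal.ofReal (Q (φ x - c)) :=
    fun c => (hQcont.measurable.comp (hφ.sub measurable_const)).ennreal_ofReal
  have habs : ∀ t : ℝ, Q t = Q |t| := by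
    intro t
    rcases abs_cases t with ⟨h, _⟩ | ⟨h, _⟩
    · rw [h]
    · rw [h, hQe]
  have hQmono := myQmono Q hQ hQe
  -- a bounded-φ subset of positive measure
  set S : ℕ → Set ℝ := fun n => Icc a b ∩ {x | |φ x| ≤ n} with hSdef
  have hSex : ∃ n, volume (S n) ≠ 0 := by
    by_contra h
    push_neg at h
    have hsub : Icc a b ⊆ ⋃ n, S n := fun x hx =>
      mem_iUnion.mpr ⟨⌈|φ x|⌉₊, hx, by simp only [mem_setOf_eq]; exact Nat.le_ceil _⟩
    exact hvne0 (measure_mono_null hsub (measure_iUnion_null h))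
  obtain ⟨R, hR⟩ := hSex
  set m := volume (S R) with hmdef
  have hmtop : m ≠ ⊤ := ne_top_of_le_ne_top hvnetop (measure_mono inter_subset_left)
  -- coercivity lower bound
  have hcoer : ∀ c : ℝ, (R:ℝ) ≤ |c| → m * ENNReal.ofReal (Q (|c| - R)) ≤ F c := by
    intro c hc
    have h1 : ∫⁻ _ in S R, ENNReal.ofReal (Q (|c| - R))
        ≤ ∫⁻ x in S R, ENNReal.ofReal (Q (φ x - c)) := by
      refine setLIntegral_mono ((hmeas c)) ?_
      intro x hx
      apply ENNReal.ofReal_le_ofReal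
      rw [habs (φ x - c)]
      have h3 : |c| - |φ x| ≤ |φ x - c| := by
        have h4 := abs_sub_abs_le_abs_sub c (φ x)
        rw [abs_sub_comm] at h4
        linarith
      have h5 : |φ x| ≤ R := hx.2
      exact hQmono _ _ (by linarith) (by linarith)
    calc m * ENNReal.ofReal (Q (|c| - R))
        = ∫⁻ _ in S R, ENNReal.ofReal (Q (|c| - R)) := by rw [setLIntegral_const]; ring
      _ ≤ ∫⁻ x in S R, ENNReal.ofReal (Q (φ x - c)) := h1
      _ ≤ F c := lintegral_mono_set inter_subset_left
  set I := ⨅ c : ℝ, F c with hIdef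
  have hI : I ≠ ⊤ := ne_top_of_le_ne_top hFc₀ (iInf_le F c₀)
  have hI1 : I + 1 ≠ ⊤ := by simp [ENNReal.add_eq_top, hI]
  have hd : (I + 1) / m < ⊤ := ENNReal.div_lt_top hI1 hR
  set M : ℝ := ((I + 1) / m).toReal + 1 with hMdef
  have hdM : (I + 1) / m ≤ ENNReal.ofReal M := by
    refine le_of_lt ?_
    rw [ENNReal.lt_ofReal_iff_toReal_lt hd.ne]
    simp [hMdef]
  have hmM : I + 1 ≤ m * ENNReal.ofReal M := by
    have h6 := (ENNReal.div_le_iff hR hmtop).mp hdM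
    rwa [mul_comm] at h6
  obtain ⟨T, hT⟩ := eventually_atTop.mp ((myQtop Q hQ hQe).eventually_ge_atTop M)
  set N : ℝ := (R:ℝ) + max T 0 + 1 with hNdef
  have hbig : ∀ c : ℝ, N ≤ |c| → I + 1 ≤ F c := by
    intro c hc
    have hmax : (0:ℝ) ≤ max T 0 := le_max_right _ _
    have hRc : (R:ℝ) ≤ |c| := by rw [hNdef] at hc; linarith
    refine le_trans (le_trans hmM ?_) (hcoer c hRc)
    refine mul_le_mul_right (ENNReal.ofReal_le_ofReal ?_) m
    refine hT _ ?_
    have : T ≤ max T 0 := le_max_left _ _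
    rw [hNdef] at hc
    linarith
  -- minimizing sequence and Bolzano–Weierstrass
  have hrange : (range F).Nonempty := ⟨F c₀, mem_range_self _⟩
  obtain ⟨u, -, hu, humem⟩ := exists_seq_tendsto_sInf hrange (OrderBot.bddBelow _)
  rw [sInf_range] at hu
  choose cs hcs using humem
  have hFcs : Tendsto (fun n => F (cs n)) atTop (𝓝 I) := by
    have : (fun n => F (cs n)) = u := funext hcs
    rw [this]; exact hu
  have hev : ∀ᶠ n in atTop, cs n ∈ Icc (-N) N := by
    have hlt : ∀ᶠ n in atTop, F (cs n) < I + 1 :=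
      hFcs.eventually_lt_const (ENNReal.lt_add_right hI one_ne_zero)
    filter_upwards [hlt] with n hn
    rw [mem_Icc, ← abs_le]
    by_contra h
    exact absurd (hbig _ (not_le.mp h).le) (not_le.mpr hn)
  obtain ⟨α, -, ψ, hψ, hcψ⟩ :=
    tendsto_subseq_of_frequently_bounded (Metric.isBounded_Icc (-N) N) hev.frequently
  have hFψ : Tendsto (fun k => F (cs (ψ k))) atTop (𝓝 I) := hFcs.comp hψ.tendsto_atTop
  -- Fatou: α is a minimizer
  have hmin : F α ≤ I := by
    have hfatou := lintegral_liminf_le (μ := volume.restrict (Icc a b))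
      (f := fun k x => ENNReal.ofReal (Q (φ x - cs (ψ k)))) (u := atTop) (fun k => hmeas _)
    have hptw : ∀ x : ℝ, Filter.liminf (fun k => ENNReal.ofReal (Q (φ x - cs (ψ k)))) atTop
        = ENNReal.ofReal (Q (φ x - α)) := by
      intro x
      apply Filter.Tendsto.liminf_eq
      exact (ENNReal.continuous_ofReal.tendsto _).comp
        ((hQcont.tendsto _).comp (tendsto_const_nhds.sub hcψ))
    calc F α = ∫⁻ x in Icc a b,
          Filter.liminf (fun k => ENNReal.ofReal (Q (φ x - cs (ψ k)))) atTop := by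
          refine lintegral_congr fun x => ?_
          rw [hptw]
      _ ≤ liminf (fun k => F (cs (ψ k))) atTop := hfatou
      _ = I := hFψ.liminf_eq
  have hFα : ∀ c', F α ≤ F c' := fun c' => hmin.trans (iInf_le F c')
  refine ⟨α, fun c' => (hiff α c').mpr (hFα c'), ?_⟩
  -- uniqueness
  intro y hy
  by_contra hne
  have hFy : ∀ c', F y ≤ F c' := fun c' => (hiff y c').mp (hy c')
  have hEq : F α = F y := le_antisymm (hFα y) (hFy α)
  have hfin : F y ≠ ⊤ := ne_top_of_le_ne_top hFc₀ (hFy c₀)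
  set mid := (y + α) / 2 with hmid
  set r : ℝ≥0∞ := ENNReal.ofReal (1/2) with hr
  have hptlt : ∀ x : ℝ, ENNReal.ofReal (Q (φ x - mid))
      < r * ENNReal.ofReal (Q (φ x - y)) + r * ENNReal.ofReal (Q (φ x - α)) := by
    intro x
    have hne' : φ x - y ≠ φ x - α := fun h => hne (by linarith)
    have hkey := hQ.2 (mem_univ (φ x - y)) (mem_univ (φ x - α)) hne'
      (by norm_num : (0:ℝ) < 1/2) (by norm_num : (0:ℝ) < 1/2) (by norm_num)
    simp only [smul_eq_mul] at hkey
    have harg : 1/2 * (φ x - y) + 1/2 * (φ x - α) = φ x - mid := by rw [hmid]; ring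
    rw [harg] at hkey
    have h0y : (0:ℝ) ≤ 1/2 * Q (φ x - y) := by
      have := hQ0 (φ x - y); linarith
    have h0α : (0:ℝ) ≤ 1/2 * Q (φ x - α) := by
      have := hQ0 (φ x - α); linarith
    calc ENNReal.ofReal (Q (φ x - mid))
        < ENNReal.ofReal (1/2 * Q (φ x - y) + 1/2 * Q (φ x - α)) := by
          rw [ENNReal.ofReal_lt_ofReal_iff (lt_of_le_of_lt (hQ0 _) hkey)]
          exact hkey
      _ = r * ENNReal.ofReal (Q (φ x - y)) + r * ENNReal.ofReal (Q (φ x - α)) := by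
          rw [ENNReal.ofReal_add h0y h0α, ENNReal.ofReal_mul (by norm_num),
            ENNReal.ofReal_mul (by norm_num)]
  set g : ℝ → ℝ≥0∞ :=
    fun x => r * ENNReal.ofReal (Q (φ x - y)) + r * ENNReal.ofReal (Q (φ x - α)) with hg
  have hgmeas : Measurable g := ((hmeas y).const_mul r).add ((hmeas α).const_mul r)
  have hgint : ∫⁻ x in Icc a b, g x = r * F y + r * F α := by
    rw [hg]
    rw [lintegral_add_left ((hmeas y).const_mul r),
      lintegral_const_mul r (hmeas y), lintegral_const_mul r (hmeas α)]
  have hrtop : r ≠ ⊤ := ENNReal.ofReal_ne_top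
  have hαfin : F α ≠ ⊤ := by rw [hEq]; exact hfin
  have hgfin : r * F y + r * F α ≠ ⊤ :=
    ENNReal.add_ne_top.mpr ⟨ENNReal.mul_ne_top hrtop hfin, ENNReal.mul_ne_top hrtop hαfin⟩
  have hmidle : F mid ≤ ∫⁻ x in Icc a b, g x :=
    lintegral_mono fun x => (hptlt x).le
  have hmidfin : F mid ≠ ⊤ := ne_top_of_le_ne_top (hgint ▸ hgfin) hmidle
  have hstrict : F mid < ∫⁻ x in Icc a b, g x :=
    setLIntegral_strict_mono measurableSet_Icc hvne0 hgmeas hmidfin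
      (ae_of_all _ fun x _ => hptlt x)
  rw [hgint, hEq] at hstrict
  have hsum : r * F y + r * F y = F y := by
    rw [← add_mul]
    have h2 : r + r = 1 := by
      rw [hr, ← ENNReal.ofReal_add (by norm_num) (by norm_num)]
      norm_num
    rw [h2, one_mul]
  rw [hsum] at hstrict
  exact absurd (hFy mid) (not_le.mpr hstrict)
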